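/- Let N ≥ 1, J ∈ M_N(ℂ), and let ξ be a function from ℂ to M_N(ℂ) and ξ₁ ∈ M_N(ℂ) such that λ·(ξ(λ) − 1) converges to ξ₁ as |λ| → ∞. Then ξ(λ) is invertible for all λ of sufficiently large modulus, and λ·(J − ξ(λ)·J·ξ(λ)⁻¹) converges to J·ξ₁ − ξ₁·J as |λ| → ∞. -/

import Mathlib

open Matrix Filter

/-- If `λ (ξ(λ) − 1) → ξ₁` as `|λ| → ∞`, then `ξ(λ)` is invertible for all `λ`
of sufficiently large modulus and `λ (J − ξ(λ) J ξ(λ)⁻¹) → [J, ξ₁]`. -/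
theorem potential_recovery (N : ℕ) (hN : 1 ≤ N)
    (J : Matrix (Fin N) (Fin N) ℂ)
    (ξ : ℂ → Matrix (Fin N) (Fin N) ℂ) (ξ₁ : Matrix (Fin N) (Fin N) ℂ)
    (h : Tendsto (fun lam : ℂ => lam • (ξ lam - 1)) (Bornology.cobounded ℂ) (nhds ξ₁)) :
    (∀ᶠ lam : ℂ in Bornology.cobounded ℂ, IsUnit (ξ lam)) ∧
    Tendsto (fun lam : ℂ => lam • (J - ξ lam * J * (ξ lam)⁻¹))
      (Bornology.cobounded ℂ) (nhds (J * ξ₁ - ξ₁ * J)) := by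
  have hinv : Tendsto (fun lam : ℂ => lam⁻¹) (Bornology.cobounded ℂ) (nhds 0) :=
    tendsto_inv₀_cobounded
  have hne : ∀ᶠ lam : ℂ in Bornology.cobounded ℂ, lam ≠ 0 :=
    Bornology.isBounded_singleton (x := (0:ℂ))
  -- ξ → 1
  have hξ1 : Tendsto ξ (Bornology.cobounded ℂ) (nhds 1) := by
    have h0 : Tendsto (fun lam : ℂ => lam⁻¹ • (lam • (ξ lam - 1)))
        (Bornology.cobounded ℂ) (nhds ((0 : ℂ) • ξ₁)) := hinv.smul h
    rw [zero_smul] at h0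
    have heq : (fun lam : ℂ => lam⁻¹ • (lam • (ξ lam - 1)) + 1) =ᶠ[Bornology.cobounded ℂ] ξ := by
      filter_upwards [hne] with lam hlam
      rw [smul_smul, inv_mul_cancel₀ hlam, one_smul, sub_add_cancel]
    have := h0.add (tendsto_const_nhds (x := (1 : Matrix (Fin N) (Fin N) ℂ)))
    rw [zero_add] at this
    exact this.congr' heq
  -- determinant → 1
  have hdet : Tendsto (fun lam : ℂ => (ξ lam).det) (Bornology.cobounded ℂ) (nhds 1) := by
    have hc : Continuous fun A : Matrix (Fin N) (Fin N) ℂ => A.det := continuous_id.matrix_det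
    simpa [Function.comp_def] using (hc.continuousAt (x := (1 : Matrix (Fin N) (Fin N) ℂ))).tendsto.comp hξ1
  have hdetne : ∀ᶠ lam : ℂ in Bornology.cobounded ℂ, (ξ lam).det ≠ 0 :=
    hdet.eventually_ne one_ne_zero
  have hunit : ∀ᶠ lam : ℂ in Bornology.cobounded ℂ, IsUnit (ξ lam) := by
    filter_upwards [hdetne] with lam hl
    exact (Matrix.isUnit_iff_isUnit_det _).mpr (isUnit_iff_ne_zero.mpr hl)
  refine ⟨hunit, ?_⟩
  -- ξ⁻¹ → 1
  have hinvξ : Tendsto (fun lam : ℂ => (ξ lam)⁻¹) (Bornology.cobounded ℂ) (nhds 1) := by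
    have hc : ContinuousAt Inv.inv (1 : Matrix (Fin N) (Fin N) ℂ) := by
      apply continuousAt_matrix_inv
      rw [Matrix.det_one]
      exact NormedRing.inverse_continuousAt (1 : ℂˣ)
    have := hc.tendsto.comp hξ1
    rwa [inv_one] at this
  -- the commutator part
  have hg : Tendsto (fun lam : ℂ => J * (lam • (ξ lam - 1)) - (lam • (ξ lam - 1)) * J)
      (Bornology.cobounded ℂ) (nhds (J * ξ₁ - ξ₁ * J)) :=
    ((tendsto_const_nhds.mul h).sub (h.mul tendsto_const_nhds))
  have hmain : Tendsto
      (fun lam : ℂ => (J * (lam • (ξ lam - 1)) - (lam • (ξ lam - 1)) * J) * (ξ lam)⁻¹)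
      (Bornology.cobounded ℂ) (nhds (J * ξ₁ - ξ₁ * J)) := by
    have := hg.mul hinvξ
    rwa [mul_one] at this
  refine hmain.congr' ?_
  filter_upwards [hdetne] with lam hl
  have hx : ξ lam * (ξ lam)⁻¹ = 1 := mul_nonsing_inv _ (isUnit_iff_ne_zero.mpr hl)
  have expand : (J * (lam • (ξ lam - 1)) - (lam • (ξ lam - 1)) * J) * (ξ lam)⁻¹
      = lam • (J * (ξ lam * (ξ lam)⁻¹) - ξ lam * J * (ξ lam)⁻¹) := by
    simp only [mul_smul_comm, smul_mul_assoc, sub_mul, mul_sub, mul_one, one_mul, smul_sub,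
      mul_assoc, hx]
    abel
  rw [expand, hx, mul_one]
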